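/- JOCC equation: Let A, M ∈ ℂ^{n×n} be Hermitian, M positive definite, with eigenpair (λ₁, x₁) of the pencil (A, M). Let x ∈ ℂⁿ be nonzero, neither collinear with x₁ nor M-orthogonal to x₁, with Rayleigh quotient θ = λ(x) and residual r = Ax − θMx. Let Q = I − ‖x‖_M^{-2} x x* M be the projector onto the M-orthogonal complement of span{x}. Then there exists a scalar τ ≠ 0 such that x̃ = −x + τx₁ satisfies Q x̃ = x̃ and Q*(A − λ₁M)Q x̃ = −r. -/

import Mathlib

open Matrix ComplexOrder

lemma vecMulVec_mulVec' {n : ℕ} (a b v : Fin n → ℂ) :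
    (vecMulVec a b) *ᵥ v = (b ⬝ᵥ v) • a := by
  ext i
  simp only [mulVec, dotProduct, vecMulVec_apply, Pi.smul_apply, smul_eq_mul, Finset.sum_mul]
  exact Finset.sum_congr rfl fun j _ => by ring

lemma hermdot {n : ℕ} {N : Matrix (Fin n) (Fin n) ℂ} (hN : N.IsHermitian) (a b : Fin n → ℂ) :
    star (star a ⬝ᵥ N *ᵥ b) = star b ⬝ᵥ N *ᵥ a := by
  rw [← star_dotProduct, star_mulVec, hN.eq, ← dotProduct_mulVec]

lemma vecMulVec_conjT {n : ℕ} (x : Fin n → ℂ) :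
    (vecMulVec x (star x))ᴴ = vecMulVec x (star x) := by
  ext i j
  simp [vecMulVec_apply, conjTranspose_apply, mul_comm]

/-- JOCC equation: there is τ ≠ 0 so that x̃ = −x + τx₁ satisfies Qx̃ = x̃ and
Q*(A − λ₁M)Q x̃ = −r, where Q = I − ‖x‖_M⁻² x x* M and r = Ax − θMx with θ the
Rayleigh quotient of x. -/
theorem stmt14 {n : ℕ} (A M : Matrix (Fin n) (Fin n) ℂ)
    (hA : A.IsHermitian) (hM : M.PosDef)
    (lam1 : ℝ) (x1 x : Fin n → ℂ) (hx1 : x1 ≠ 0)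
    (heig : A.mulVec x1 = (lam1 : ℂ) • M.mulVec x1)
    (hx : x ≠ 0)
    (hcol : ∀ c : ℂ, x ≠ c • x1)
    (hMorth : star x1 ⬝ᵥ M.mulVec x ≠ 0) :
    ∃ τ : ℂ, τ ≠ 0 ∧
      (1 - (star x ⬝ᵥ M.mulVec x)⁻¹ • (vecMulVec x (star x) * M)).mulVec (-x + τ • x1)
        = -x + τ • x1 ∧
      ((1 - (star x ⬝ᵥ M.mulVec x)⁻¹ • (vecMulVec x (star x) * M))ᴴ *
          (A - (lam1 : ℂ) • M) *
          (1 - (star x ⬝ᵥ M.mulVec x)⁻¹ • (vecMulVec x (star x) * M))).mulVec (-x + τ • x1)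
        = -(A.mulVec x -
            ((star x ⬝ᵥ A.mulVec x) / (star x ⬝ᵥ M.mulVec x)) • M.mulVec x) := by
  set s : ℂ := star x ⬝ᵥ M.mulVec x with hs_def
  set t : ℂ := star x ⬝ᵥ M.mulVec x1 with ht_def
  have hs : s ≠ 0 := ne_of_gt (hM.dotProduct_mulVec_pos hx)
  have hsr : star s = s := hermdot hM.1 x x
  have ht : t ≠ 0 := by
    rw [ht_def, ← hermdot hM.1 x1 x]
    exact star_ne_zero.mpr hMorth
  refine ⟨s / t, div_ne_zero hs ht, ?_, ?_⟩
  · -- Q x̃ = x̃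
    have key : star x ⬝ᵥ M *ᵥ (-x + (s / t) • x1) = 0 := by
      rw [mulVec_add, mulVec_neg, mulVec_smul, dotProduct_add, dotProduct_neg,
        dotProduct_smul, ← hs_def, ← ht_def, smul_eq_mul, div_mul_cancel₀ s ht]
      ring
    rw [sub_mulVec, one_mulVec, smul_mulVec, ← mulVec_mulVec, vecMulVec_mulVec',
      key, zero_smul, smul_zero, sub_zero]
  · -- Q* (A - λM) Q x̃ = -r
    have key : star x ⬝ᵥ M *ᵥ (-x + (s / t) • x1) = 0 := by
      rw [mulVec_add, mulVec_neg, mulVec_smul, dotProduct_add, dotProduct_neg,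
        dotProduct_smul, ← hs_def, ← ht_def, smul_eq_mul, div_mul_cancel₀ s ht]
      ring
    have hQfix : (1 - s⁻¹ • (vecMulVec x (star x) * M)) *ᵥ (-x + (s / t) • x1)
        = -x + (s / t) • x1 := by
      rw [sub_mulVec, one_mulVec, smul_mulVec, ← mulVec_mulVec, vecMulVec_mulVec',
        key, zero_smul, smul_zero, sub_zero]
    have hBv : (A - (lam1 : ℂ) • M) *ᵥ (-x + (s / t) • x1)
        = -(A *ᵥ x - (lam1 : ℂ) • (M *ᵥ x)) := by
      rw [sub_mulVec, smul_mulVec, mulVec_add, mulVec_add, mulVec_neg, mulVec_neg,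
        mulVec_smul, mulVec_smul, heig]
      module
    have hQH : (1 - s⁻¹ • (vecMulVec x (star x) * M))ᴴ
        = 1 - s⁻¹ • (M * vecMulVec x (star x)) := by
      rw [conjTranspose_sub, conjTranspose_one, conjTranspose_smul, conjTranspose_mul,
        vecMulVec_conjT, hM.1.eq, star_inv₀, hsr]
    rw [← mulVec_mulVec, ← mulVec_mulVec, hQfix, hBv, hQH]
    set w : Fin n → ℂ := A *ᵥ x - (lam1 : ℂ) • (M *ᵥ x) with hw_def
    have hxw : star x ⬝ᵥ w = star x ⬝ᵥ A *ᵥ x - (lam1 : ℂ) * s := by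
      rw [hw_def, dotProduct_sub, dotProduct_smul, smul_eq_mul, hs_def]
    rw [sub_mulVec, one_mulVec, smul_mulVec, ← mulVec_mulVec, vecMulVec_mulVec',
      mulVec_smul, dotProduct_neg, hxw]
    set a : ℂ := star x ⬝ᵥ A *ᵥ x with ha_def
    have hscal : s⁻¹ * (-(a - (lam1 : ℂ) * s)) = -(a / s) + (lam1 : ℂ) := by
      field_simp
      ring
    rw [smul_smul, hscal, hw_def]
    module
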